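/- Let n>2 be an integer and g a nonnegative integer with gcd(n,g)=1. Set f_n = F_1 − F_n + Σ_{i=1}^{n−2} F_i·(F_n/(F_1 − F_{n+1}))^{n−(i+1)}, and assume f_n ≠ 0. Then the inverse of C_{n,g}(F) equals (1/f_n)·C·Q_gᵀ, where C is the circulant matrix with first row (c_0,…,c_{n−1}) given by c_0 = 1 + Σ_{i=1}^{n−2} F_{n−i}F_n^{i−1}/(F_1 − F_{n+1})^i, c_1 = −1 + Σ_{i=1}^{n−2} F_{n−1−i}F_n^{i−1}/(F_1 − F_{n+1})^i, and c_j = −F_n^{j−2}/(F_1 − F_{n+1})^{j−1} for 2 ≤ j ≤ n−1. -/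

import Mathlib

open Matrix

/-- The `g`-circulant matrix of size `n` with first row `(a 0, a 1, …, a (n-1))`:
its `(i,j)` entry (0-indexed) equals `a ((j - i*g) mod n)`. -/
def gCirc {α : Type*} (n g : ℕ) (a : ℕ → α) : Matrix (Fin n) (Fin n) α :=
  Matrix.of fun i j => a ((j.val + (n - (i.val * g) % n)) % n)

/-- `Q_g`: the `g`-circulant matrix with first row `(1,0,…,0)`. -/
def Qg (n g : ℕ) : Matrix (Fin n) (Fin n) ℝ :=
  gCirc n g (fun m => if m = 0 then (1 : ℝ) else 0)

/-- `circ c`: the circulant (`1`-circulant) matrix with first row `(c 0, …, c (n-1))`. -/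
def circ (n : ℕ) (c : ℕ → ℝ) : Matrix (Fin n) (Fin n) ℝ :=
  gCirc n 1 c

open Finset Nat
lemma mod_eq_of_zmod {n : ℕ} (hn : 0 < n) {a b : ℕ} (h : (a : ZMod n) = (b : ZMod n)) :
    a % n = b % n := by
  haveI : NeZero n := ⟨hn.ne'⟩
  simpa [ZMod.val_natCast] using congrArg ZMod.val h

lemma cast_n_sub {n x : ℕ} (hx : x ≤ n) : ((n - x : ℕ) : ZMod n) = -(x : ZMod n) := by
  have h : ((n - x : ℕ) : ZMod n) + (x : ZMod n) = ((n : ℕ) : ZMod n) := by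
    rw [← Nat.cast_add]; congr 1; omega
  rw [ZMod.natCast_self] at h
  linear_combination h

lemma circ_apply {n : ℕ} (a : ℕ → ℝ) (i k : Fin n) :
    circ n a i k = a ((k.val + (n - i.val)) % n) := by
  show a ((k.val + (n - (i.val * 1) % n)) % n) = _
  rw [Nat.mul_one, Nat.mod_eq_of_lt i.isLt]

lemma conv_core (K : ℕ) (hK : 1 ≤ K) (fn : ℝ) (c : ℕ → ℝ)
    (Fn B : ℝ) (hFn : Fn = (Nat.fib (K+2) : ℝ)) (hB : B = 1 - (Nat.fib (K+3) : ℝ))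
    (hBne : B ≠ 0)
    (hfn : fn = 1 - Fn + ∑ t ∈ Finset.range K, (Nat.fib (1+t) : ℝ) * (Fn / B) ^ (K - t))
    (hc0 : c 0 = 1 + ∑ t ∈ Finset.range K, (Nat.fib (K+1-t) : ℝ) * (Fn ^ t / B ^ (t+1)))
    (hc1 : c 1 = -1 + ∑ t ∈ Finset.range K, (Nat.fib (K-t) : ℝ) * (Fn ^ t / B ^ (t+1)))
    (hc2 : ∀ t, t < K → c (t+2) = -(Fn ^ t / B ^ (t+1)))
    (m : ℕ) (hm : m < K + 2) :
    ∑ j ∈ Finset.range (K+2), c j * (Nat.fib ((m + (K + 2 - j)) % (K+2) + 1) : ℝ)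
      = if m = 0 then fn else 0 := by
  rw [Finset.sum_range_succ' _ (K+1), Finset.sum_range_succ' _ K]
  rcases Nat.eq_zero_or_pos m with rfl | hm1
  · rw [if_pos rfl]
    have i0 : (0 + (K + 2 - 0)) % (K+2) + 1 = 1 := by
      rw [Nat.sub_zero, Nat.zero_add, Nat.mod_self]
    have i1 : (0 + (K + 2 - (0+1))) % (K+2) + 1 = K + 2 := by
      rw [Nat.zero_add, Nat.mod_eq_of_lt (by omega)]; omega
    have i2 : ∀ t, t < K → (0 + (K + 2 - (t+1+1))) % (K+2) + 1 = K + 1 - t := by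
      intro t ht
      rw [Nat.zero_add, Nat.mod_eq_of_lt (by omega)]; omega
    rw [i0, i1]
    have eA : ∑ t ∈ Finset.range K, c (t+1+1) * (Nat.fib ((0 + (K + 2 - (t+1+1))) % (K+2) + 1) : ℝ)
        = ∑ t ∈ Finset.range K, -((Nat.fib (K+1-t) : ℝ) * (Fn ^ t / B ^ (t+1))) := by
      refine Finset.sum_congr rfl fun t ht => ?_
      rw [i2 t (Finset.mem_range.mp ht), hc2 t (Finset.mem_range.mp ht)]; ring
    have e1 : ∑ t ∈ Finset.range K, (Nat.fib (1+t) : ℝ) * (Fn / B) ^ (K - t)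
        = ∑ t ∈ Finset.range K, Fn * ((Nat.fib (K-t) : ℝ) * (Fn ^ t / B ^ (t+1))) := by
      rw [← Finset.sum_range_reflect]
      refine Finset.sum_congr rfl fun t ht => ?_
      have ht' := Finset.mem_range.mp ht
      rw [show 1 + (K - 1 - t) = K - t from by omega, show K - (K - 1 - t) = t + 1 from by omega]
      ring
    rw [eA, hc0, hc1, hfn, e1, Finset.sum_neg_distrib, ← Finset.mul_sum]
    push_cast [Nat.fib_one]
    rw [← hFn]
    ring
  · rw [if_neg (by omega)]
    obtain ⟨M, rfl⟩ : ∃ M, m = M + 1 := ⟨m - 1, by omega⟩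
    have hMK : M ≤ K := by omega
    have i0 : (M + 1 + (K + 2 - 0)) % (K+2) + 1 = M + 2 := by
      rw [Nat.sub_zero, Nat.add_mod_right, Nat.mod_eq_of_lt (by omega)]
    have i1 : (M + 1 + (K + 2 - (0+1))) % (K+2) + 1 = M + 1 := by
      rw [show M + 1 + (K + 2 - (0+1)) = M + (K+2) from by omega, Nat.add_mod_right,
        Nat.mod_eq_of_lt (by omega)]
    have i2a : ∀ t, t < M → (M + 1 + (K + 2 - (t+1+1))) % (K+2) + 1 = M - t := by
      intro t ht
      rw [show M + 1 + (K + 2 - (t+1+1)) = (M - t - 1) + (K+2) from by omega,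
        Nat.add_mod_right, Nat.mod_eq_of_lt (by omega)]
      omega
    have i2b : ∀ t, M ≤ t → t < K → (M + 1 + (K + 2 - (t+1+1))) % (K+2) + 1 = M + K - t + 2 := by
      intro t ht1 ht2
      rw [Nat.mod_eq_of_lt (by omega)]; omega
    have hsplit : ∀ h : ℕ → ℝ, ∑ t ∈ Finset.range K, h t
        = ∑ t ∈ Finset.range M, h t + ∑ t ∈ Finset.Ico M K, h t := by
      intro h
      rw [Finset.range_eq_Ico, ← Finset.sum_Ico_consecutive _ (Nat.zero_le M) hMK,
        ← Finset.range_eq_Ico]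
    rw [i0, i1]
    have eA : ∑ t ∈ Finset.range K, c (t+1+1) * (Nat.fib ((M + 1 + (K + 2 - (t+1+1))) % (K+2) + 1) : ℝ)
        = -(∑ t ∈ Finset.range M, (Nat.fib (M-t) : ℝ) * (Fn ^ t / B ^ (t+1)))
          - ∑ t ∈ Finset.Ico M K, (Nat.fib (M+K-t+2) : ℝ) * (Fn ^ t / B ^ (t+1)) := by
      rw [hsplit]
      have p1 : ∑ t ∈ Finset.range M, c (t+1+1) * (Nat.fib ((M + 1 + (K + 2 - (t+1+1))) % (K+2) + 1) : ℝ)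
          = -(∑ t ∈ Finset.range M, (Nat.fib (M-t) : ℝ) * (Fn ^ t / B ^ (t+1))) := by
        rw [← Finset.sum_neg_distrib]
        refine Finset.sum_congr rfl fun t ht => ?_
        have ht' := Finset.mem_range.mp ht
        rw [i2a t ht', hc2 t (by omega)]; ring
      have p2 : ∑ t ∈ Finset.Ico M K, c (t+1+1) * (Nat.fib ((M + 1 + (K + 2 - (t+1+1))) % (K+2) + 1) : ℝ)
          = -(∑ t ∈ Finset.Ico M K, (Nat.fib (M+K-t+2) : ℝ) * (Fn ^ t / B ^ (t+1))) := by
        rw [← Finset.sum_neg_distrib]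
        refine Finset.sum_congr rfl fun t ht => ?_
        have ht' := Finset.mem_Ico.mp ht
        rw [i2b t ht'.1 ht'.2, hc2 t ht'.2]; ring
      rw [p1, p2]; ring
    have hf2 : ∀ t, t < K → (Nat.fib (K+1-t) : ℝ) * (Nat.fib (M+2) : ℝ)
        + (Nat.fib (K-t) : ℝ) * (Nat.fib (M+1) : ℝ) = (Nat.fib (M+K-t+2) : ℝ) := by
      intro t ht
      have h3 := Nat.fib_add (K-t) (M+1)
      rw [show K - t + (M+1) + 1 = M+K-t+2 from by omega,
        show K - t + 1 = K + 1 - t from by omega] at h3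
      push_cast [h3]; ring
    have eB : c 0 * (Nat.fib (M+2) : ℝ) + c 1 * (Nat.fib (M+1) : ℝ)
        = (Nat.fib M : ℝ) + ∑ t ∈ Finset.range K, (Nat.fib (M+K-t+2) : ℝ) * (Fn ^ t / B ^ (t+1)) := by
      rw [hc0, hc1]
      have hsum : ∑ t ∈ Finset.range K, ((Nat.fib (K+1-t) : ℝ) * (Fn ^ t / B ^ (t+1))) * (Nat.fib (M+2) : ℝ)
            + ∑ t ∈ Finset.range K, ((Nat.fib (K-t) : ℝ) * (Fn ^ t / B ^ (t+1))) * (Nat.fib (M+1) : ℝ)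
          = ∑ t ∈ Finset.range K, (Nat.fib (M+K-t+2) : ℝ) * (Fn ^ t / B ^ (t+1)) := by
        rw [← Finset.sum_add_distrib]
        refine Finset.sum_congr rfl fun t ht => ?_
        have ht' := Finset.mem_range.mp ht
        linear_combination (Fn ^ t / B ^ (t+1)) * hf2 t ht'
      have hfM : (Nat.fib (M+2) : ℝ) - (Nat.fib (M+1) : ℝ) = (Nat.fib M : ℝ) := by
        rw [Nat.fib_add_two]; push_cast; ring
      rw [add_mul, add_mul, Finset.sum_mul, Finset.sum_mul]
      linarith [hsum, hfM]
    have eTel : ∑ t ∈ Finset.range M, (Nat.fib (M+K-t+2) : ℝ) * (Fn ^ t / B ^ (t+1))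
        - ∑ t ∈ Finset.range M, (Nat.fib (M-t) : ℝ) * (Fn ^ t / B ^ (t+1))
        = -(Nat.fib M : ℝ) := by
      have h4 := Finset.sum_range_sub (fun t => (Nat.fib (M-t) : ℝ) * Fn ^ t / B ^ t) M
      rw [← Finset.sum_sub_distrib]
      have step : ∀ t ∈ Finset.range M,
          (Nat.fib (M+K-t+2) : ℝ) * (Fn ^ t / B ^ (t+1)) - (Nat.fib (M-t) : ℝ) * (Fn ^ t / B ^ (t+1))
          = (Nat.fib (M-(t+1)) : ℝ) * Fn ^ (t+1) / B ^ (t+1) - (Nat.fib (M-t) : ℝ) * Fn ^ t / B ^ t := by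
        intro t ht
        have ht' := Finset.mem_range.mp ht
        have hfa : (Nat.fib (M+K-t+2) : ℝ)
            = (Nat.fib (M-t-1) : ℝ) * Fn + (Nat.fib (M-t) : ℝ) * (1 - B) := by
          have h3 := Nat.fib_add (M-t-1) (K+2)
          rw [show M - t - 1 + (K+2) + 1 = M+K-t+2 from by omega,
            show M - t - 1 + 1 = M - t from by omega] at h3
          rw [h3, hFn, hB]; push_cast; ring
        rw [hfa, show M - (t+1) = M - t - 1 from by omega]
        field_simp
        ring
      rw [Finset.sum_congr rfl step, h4]
      simp [Nat.sub_self]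
    have hs2 := hsplit (fun t => (Nat.fib (M+K-t+2) : ℝ) * (Fn ^ t / B ^ (t+1)))
    rw [show (0:ℕ)+1 = 1 from rfl, eA]
    linarith [eTel, eB, hs2]


lemma circ_mul_circ (K : ℕ) (hK : 1 ≤ K) (fn : ℝ) (c : ℕ → ℝ)
    (Fn B : ℝ) (hFn : Fn = (Nat.fib (K+2) : ℝ)) (hB : B = 1 - (Nat.fib (K+3) : ℝ))
    (hBne : B ≠ 0)
    (hfn : fn = 1 - Fn + ∑ t ∈ Finset.range K, (Nat.fib (1+t) : ℝ) * (Fn / B) ^ (K - t))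
    (hc0 : c 0 = 1 + ∑ t ∈ Finset.range K, (Nat.fib (K+1-t) : ℝ) * (Fn ^ t / B ^ (t+1)))
    (hc1 : c 1 = -1 + ∑ t ∈ Finset.range K, (Nat.fib (K-t) : ℝ) * (Fn ^ t / B ^ (t+1)))
    (hc2 : ∀ t, t < K → c (t+2) = -(Fn ^ t / B ^ (t+1))) :
    circ (K+2) (fun m => (Nat.fib (m+1) : ℝ)) * circ (K+2) c = fn • 1 := by
  have hn : 0 < K + 2 := by omega
  ext i j
  have hi := i.isLt
  have hj := j.isLt
  rw [Matrix.mul_apply]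
  set m := (j.val + (K + 2 - i.val)) % (K+2) with hmdef
  have hmlt : m < K + 2 := Nat.mod_lt _ hn
  set σ : Fin (K+2) → Fin (K+2) :=
    fun k => ⟨(j.val + (K + 2 - k.val)) % (K+2), Nat.mod_lt _ hn⟩ with hσdef
  have hcpart : ∀ k : Fin (K+2), (j.val + (K + 2 - (σ k).val)) % (K+2) = k.val := by
    intro k
    have hcast : ((j.val + (K + 2 - (j.val + (K + 2 - k.val)) % (K+2)) : ℕ) : ZMod (K+2))
        = ((k.val : ℕ) : ZMod (K+2)) := by
      rw [Nat.cast_add, cast_n_sub (Nat.le_of_lt (Nat.mod_lt _ hn)), ZMod.natCast_mod,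
        Nat.cast_add, cast_n_sub (Nat.le_of_lt k.isLt)]
      ring
    have h2 := mod_eq_of_zmod hn hcast
    rwa [Nat.mod_eq_of_lt k.isLt] at h2
  have hσσ : Function.Involutive σ := by
    intro k; exact Fin.ext (hcpart k)
  have hstep : ∑ k : Fin (K+2),
        circ (K+2) (fun m => (Nat.fib (m+1) : ℝ)) i k * circ (K+2) c k j
      = ∑ k : Fin (K+2), c k.val * (Nat.fib ((m + (K + 2 - k.val)) % (K+2) + 1) : ℝ) := by
    refine (Fintype.sum_bijective σ hσσ.bijective _ _ fun k => ?_).symm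
    rw [circ_apply, circ_apply, hcpart k]
    have hfpart : ((σ k).val + (K + 2 - i.val)) % (K+2) = (m + (K + 2 - k.val)) % (K+2) := by
      apply mod_eq_of_zmod hn
      show (((j.val + (K + 2 - k.val)) % (K+2) + (K + 2 - i.val) : ℕ) : ZMod (K+2)) = _
      rw [Nat.cast_add, ZMod.natCast_mod, Nat.cast_add, cast_n_sub (Nat.le_of_lt k.isLt),
        cast_n_sub (Nat.le_of_lt i.isLt), Nat.cast_add, hmdef, ZMod.natCast_mod,
        Nat.cast_add, cast_n_sub (Nat.le_of_lt i.isLt), cast_n_sub (Nat.le_of_lt k.isLt)]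
      ring
    rw [hfpart]
    ring
  rw [hstep, Fin.sum_univ_eq_sum_range
    (fun l => c l * (Nat.fib ((m + (K + 2 - l)) % (K+2) + 1) : ℝ)) (K+2)]
  rw [conv_core K hK fn c Fn B hFn hB hBne hfn hc0 hc1 hc2 m hmlt]
  have hm0 : m = 0 ↔ i = j := by
    rw [hmdef, Fin.ext_iff]
    rcases le_or_gt i.val j.val with h | h
    · rw [show j.val + (K + 2 - i.val) = (j.val - i.val) + (K+2) from by omega,
        Nat.add_mod_right, Nat.mod_eq_of_lt (by omega)]
      omega
    · rw [Nat.mod_eq_of_lt (by omega)]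
      omega
  rcases eq_or_ne i j with rfl | hne
  · rw [if_pos (hm0.mpr rfl), Matrix.smul_apply, Matrix.one_apply_eq, smul_eq_mul, mul_one]
  · rw [if_neg (fun h => hne (hm0.mp h)), Matrix.smul_apply, Matrix.one_apply_ne hne,
      smul_eq_mul, mul_zero]

lemma Qg_apply {n : ℕ} (hn : 0 < n) (g : ℕ) (i j : Fin n) :
    Qg n g i j = if j.val = (i.val * g) % n then 1 else 0 := by
  set p := (i.val * g) % n with hp
  have hplt : p < n := Nat.mod_lt _ hn
  show (if (j.val + (n - p)) % n = 0 then (1:ℝ) else 0) = _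
  congr 1
  simp only [eq_iff_iff]
  rcases le_or_gt p j.val with h | h
  · have : j.val + (n - p) = (j.val - p) + n := by omega
    rw [this, Nat.add_mod_right, Nat.mod_eq_of_lt (by omega : j.val - p < n)]
    omega
  · rw [Nat.mod_eq_of_lt (by omega : j.val + (n - p) < n)]
    omega


lemma gCirc_eq_Qg_mul_circ {n : ℕ} (hn : 0 < n) (g : ℕ) (a : ℕ → ℝ) :
    gCirc n g a = Qg n g * circ n a := by
  ext i j
  set p := (i.val * g) % n with hp
  have hplt : p < n := Nat.mod_lt _ hn
  rw [Matrix.mul_apply]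
  have : ∀ k : Fin n, Qg n g i k * circ n a k j
      = if k = (⟨p, hplt⟩ : Fin n) then circ n a k j else 0 := by
    intro k
    rw [Qg_apply hn, ← hp]
    by_cases h : k = (⟨p, hplt⟩ : Fin n)
    · simp [h]
    · rw [if_neg, if_neg h, zero_mul]
      intro hk; exact h (Fin.ext hk)
  rw [Finset.sum_congr rfl (fun k _ => this k), Finset.sum_ite_eq' univ _ _, if_pos (mem_univ _)]
  show a ((j.val + (n - p)) % n) = a ((j.val + (n - (p * 1) % n)) % n)
  rw [Nat.mul_one, Nat.mod_eq_of_lt hplt]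


lemma Qg_mul_Qg_transpose {n g : ℕ} (hn : 0 < n) (hgcd : Nat.gcd n g = 1) :
    Qg n g * (Qg n g)ᵀ = 1 := by
  ext i j
  rw [Matrix.mul_apply]
  have hl : ∀ k : Fin n, (i.val * g) % n < n := fun _ => Nat.mod_lt _ hn
  set p := (i.val * g) % n with hp
  set q := (j.val * g) % n with hq
  have hplt : p < n := Nat.mod_lt _ hn
  have hqlt : q < n := Nat.mod_lt _ hn
  have : ∀ k : Fin n, Qg n g i k * (Qg n g)ᵀ k j
      = if k = (⟨p, hplt⟩ : Fin n) then (if k = (⟨q, hqlt⟩ : Fin n) then 1 else 0) else 0 := by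
    intro k
    simp only [Matrix.transpose_apply, Qg_apply hn, ← hp, ← hq]
    by_cases h1 : k.val = p <;> by_cases h2 : k.val = q <;> simp [h1, h2, Fin.ext_iff]
  rw [Finset.sum_congr rfl (fun k _ => this k), Finset.sum_ite_eq' univ _ _, if_pos (mem_univ _)]
  rw [Matrix.one_apply]
  congr 1
  simp only [eq_iff_iff, Fin.ext_iff]
  constructor
  · intro h
    have hmod : i.val * g ≡ j.val * g [MOD n] := by
      unfold Nat.ModEq; rw [← hp, ← hq]; exact h
    have := (Nat.ModEq.cancel_right_of_coprime hgcd hmod)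
    unfold Nat.ModEq at this
    rw [Nat.mod_eq_of_lt i.isLt, Nat.mod_eq_of_lt j.isLt] at this
    exact this
  · intro h; rw [hp, hq, h]

/-- The inverse of the g-circulant matrix of Fibonacci numbers. -/
theorem inv_gCirc_fib
    (n r : ℕ) (hn : 2 < n) (hgcd : Nat.gcd n r = 1)
    (fn : ℝ)
    (hfn : fn = (Nat.fib 1 : ℝ) - (Nat.fib n : ℝ) +
        ∑ i ∈ Finset.Icc 1 (n - 2),
          (Nat.fib i : ℝ) *
            ((Nat.fib n : ℝ) / ((Nat.fib 1 : ℝ) - (Nat.fib (n + 1) : ℝ))) ^ (n - (i + 1)))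
    (hfnne : fn ≠ 0)
    (c : ℕ → ℝ)
    (hc0 : c 0 = 1 + ∑ i ∈ Finset.Icc 1 (n - 2),
        (Nat.fib (n - i) : ℝ) * (Nat.fib n : ℝ) ^ (i - 1) /
          ((Nat.fib 1 : ℝ) - (Nat.fib (n + 1) : ℝ)) ^ i)
    (hc1 : c 1 = -1 + ∑ i ∈ Finset.Icc 1 (n - 2),
        (Nat.fib (n - 1 - i) : ℝ) * (Nat.fib n : ℝ) ^ (i - 1) /
          ((Nat.fib 1 : ℝ) - (Nat.fib (n + 1) : ℝ)) ^ i)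
    (hcj : ∀ j : ℕ, 2 ≤ j → j ≤ n - 1 →
        c j = -((Nat.fib n : ℝ) ^ (j - 2) /
          ((Nat.fib 1 : ℝ) - (Nat.fib (n + 1) : ℝ)) ^ (j - 1))) :
    (gCirc n r (fun m => (Nat.fib (m + 1) : ℝ)))⁻¹ =
      (1 / fn) • (circ n c * (Qg n r)ᵀ) := by
  obtain ⟨K, rfl⟩ : ∃ K, n = K + 2 := ⟨n - 2, by omega⟩
  have hK : 1 ≤ K := by omega
  have hn0 : 0 < K + 2 := by omega
  have hfib3 : 2 ≤ Nat.fib (K + 3) := by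
    have h1 : Nat.fib 3 ≤ Nat.fib (K + 3) := Nat.fib_mono (by omega)
    have h2 : Nat.fib 3 = 2 := rfl
    omega
  have hBne : (1 : ℝ) - (Nat.fib (K + 3) : ℝ) ≠ 0 := by
    have : (2 : ℝ) ≤ (Nat.fib (K + 3) : ℝ) := by exact_mod_cast hfib3
    exact ne_of_lt (by linarith)
  simp only [show K + 2 - 2 = K from rfl, show K + 2 + 1 = K + 3 from rfl,
    show K + 2 - 1 = K + 1 from rfl, Nat.fib_one, Nat.cast_one] at hfn hc0 hc1 hcj
  have hIcc : ∀ f : ℕ → ℝ, ∑ i ∈ Finset.Icc 1 K, f i = ∑ t ∈ Finset.range K, f (1 + t) := by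
    intro f
    rw [← Finset.Ico_add_one_right_eq_Icc, Finset.sum_Ico_eq_sum_range]
    simp
  have hfn' : fn = 1 - (Nat.fib (K+2) : ℝ) + ∑ t ∈ Finset.range K,
      (Nat.fib (1+t) : ℝ) * ((Nat.fib (K+2) : ℝ) / (1 - (Nat.fib (K+3) : ℝ))) ^ (K - t) := by
    rw [hfn, hIcc]
    congr 1
    refine Finset.sum_congr rfl fun t ht => ?_
    rw [show K + 2 - (1 + t + 1) = K - t from by omega]
  have hc0' : c 0 = 1 + ∑ t ∈ Finset.range K, (Nat.fib (K+1-t) : ℝ) *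
      ((Nat.fib (K+2) : ℝ) ^ t / (1 - (Nat.fib (K+3) : ℝ)) ^ (t+1)) := by
    rw [hc0, hIcc]
    congr 1
    refine Finset.sum_congr rfl fun t ht => ?_
    rw [show K + 2 - (1 + t) = K + 1 - t from by omega, show 1 + t - 1 = t from by omega,
      show 1 + t = t + 1 from by omega]
    ring
  have hc1' : c 1 = -1 + ∑ t ∈ Finset.range K, (Nat.fib (K-t) : ℝ) *
      ((Nat.fib (K+2) : ℝ) ^ t / (1 - (Nat.fib (K+3) : ℝ)) ^ (t+1)) := by
    rw [hc1, hIcc]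
    congr 1
    refine Finset.sum_congr rfl fun t ht => ?_
    rw [show K + 1 - (1 + t) = K - t from by omega, show 1 + t - 1 = t from by omega,
      show 1 + t = t + 1 from by omega]
    ring
  have hc2' : ∀ t, t < K → c (t+2) =
      -((Nat.fib (K+2) : ℝ) ^ t / (1 - (Nat.fib (K+3) : ℝ)) ^ (t+1)) := by
    intro t ht
    have h := hcj (t+2) (by omega) (by omega)
    rwa [show t + 2 - 2 = t from by omega, show t + 2 - 1 = t + 1 from by omega] at h
  have hconv := circ_mul_circ K hK fn c _ _ rfl rfl hBne hfn' hc0' hc1' hc2'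
  apply Matrix.inv_eq_right_inv
  rw [gCirc_eq_Qg_mul_circ hn0 r (fun m => (Nat.fib (m + 1) : ℝ)), Matrix.mul_smul,
    Matrix.mul_assoc, ← Matrix.mul_assoc (circ (K+2) (fun m => (Nat.fib (m + 1) : ℝ))),
    hconv, Matrix.smul_mul, Matrix.one_mul, Matrix.mul_smul,
    Qg_mul_Qg_transpose hn0 hgcd, smul_smul, one_div,
    inv_mul_cancel₀ hfnne, one_smul]
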